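/- Let P = {e^{jβ}·(cos(jβ), sin(jβ)) : j ∈ {1,...,n}} be n points on the logarithmic spiral r = e^θ, where β > 0. Then the number of distinct (undirected) angles ∠(p, q, s) over all triples of distinct points p, q, s ∈ P is at most 3·C(n-1, 2). -/

import Mathlib

open EuclideanGeometry

private lemma inner_cmul_aux (c u v : ℂ) :
    (inner ℝ (c*u) (c*v) : ℝ) = ‖c‖^2 * (inner ℝ u v : ℝ) := by
  simp only [Complex.inner]
  have hc : (starRingEnd ℂ) c * c = ((‖c‖^2 : ℝ) : ℂ) := by
    rw [mul_comm, Complex.mul_conj, Complex.normSq_eq_norm_sq]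
  have h : (c*v) * (starRingEnd ℂ) (c*u) = ((‖c‖^2 : ℝ) : ℂ) * (v * (starRingEnd ℂ) u) := by
    rw [map_mul, ← hc]
    ring
  rw [h, Complex.re_ofReal_mul]

private lemma angle_cmul_aux {c : ℂ} (hc : c ≠ 0) (u v : ℂ) :
    InnerProductGeometry.angle (c*u) (c*v) = InnerProductGeometry.angle u v := by
  unfold InnerProductGeometry.angle
  rw [inner_cmul_aux, norm_mul, norm_mul]
  congr 1
  have h : (‖c‖ : ℝ)^2 ≠ 0 := pow_ne_zero 2 (norm_ne_zero_iff.mpr hc)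
  rw [show ‖c‖ * ‖u‖ * (‖c‖ * ‖v‖) = ‖c‖^2 * (‖u‖ * ‖v‖) by ring,
    mul_div_mul_left _ _ h]

private lemma eangle_cmul_aux {c : ℂ} (hc : c ≠ 0) (a b d : ℂ) :
    ∠ (c*a) (c*b) (c*d) = ∠ a b d := by
  unfold EuclideanGeometry.angle
  have h1 : (c*a) -ᵥ (c*b) = c * (a - b) := by simp [vsub_eq_sub]; ring
  have h2 : (c*d) -ᵥ (c*b) = c * (d - b) := by simp [vsub_eq_sub]; ring
  rw [h1, h2, angle_cmul_aux hc]
  rfl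

open EuclideanGeometry in
theorem stmt_14 (n : ℕ) (β : ℝ) (hβ : 0 < β) (p : ℕ → ℂ)
    (hp : ∀ j : ℕ, p j = Real.exp (j * β) •
      (Real.cos (j * β) + Real.sin (j * β) * Complex.I)) :
    {θ : ℝ | ∃ j₁ ∈ Finset.Icc 1 n, ∃ j₂ ∈ Finset.Icc 1 n, ∃ j₃ ∈ Finset.Icc 1 n,
        p j₁ ≠ p j₂ ∧ p j₂ ≠ p j₃ ∧ p j₁ ≠ p j₃ ∧
        θ = ∠ (p j₁) (p j₂) (p j₃)}.ncard ≤ 3 * (n - 1).choose 2 := by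
  -- exponential form of p
  have key : ∀ x : ℝ, Complex.exp ((x:ℂ) * (1+Complex.I))
      = Real.exp x * (Real.cos x + Real.sin x * Complex.I) := by
    intro x
    rw [mul_add, mul_one, Complex.exp_add, Complex.exp_mul_I, ← Complex.ofReal_exp,
      ← Complex.ofReal_cos, ← Complex.ofReal_sin]
  have hpe : ∀ j : ℕ, p j = Complex.exp (((j * β : ℝ) : ℂ) * (1 + Complex.I)) := by
    intro j
    rw [hp j, Complex.real_smul, key]
  -- shift identity
  have hshift : ∀ m j : ℕ, m ≤ j →
      p (j - m + 1) = Complex.exp ((((1 : ℝ) - m) * β : ℝ) * (1 + Complex.I)) * p j := by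
    intro m j h
    rw [hpe, hpe, ← Complex.exp_add, ← add_mul]
    congr 2
    push_cast [Nat.cast_sub h]
    ring
  have hangle : ∀ m j₁ j₂ j₃ : ℕ, m ≤ j₁ → m ≤ j₂ → m ≤ j₃ →
      ∠ (p (j₁-m+1)) (p (j₂-m+1)) (p (j₃-m+1)) = ∠ (p j₁) (p j₂) (p j₃) := by
    intro m j₁ j₂ j₃ h1 h2 h3
    rw [hshift m j₁ h1, hshift m j₂ h2, hshift m j₃ h3,
      eangle_cmul_aux (Complex.exp_ne_zero _)]
  classical
  set T : Finset (ℕ × ℕ) :=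
    ((Finset.Icc 2 n) ×ˢ (Finset.Icc 2 n)).filter (fun q => q.1 < q.2) with hT
  set g1 : ℕ × ℕ → ℝ := fun q => ∠ (p 1) (p q.1) (p q.2) with hg1
  set g2 : ℕ × ℕ → ℝ := fun q => ∠ (p 1) (p q.2) (p q.1) with hg2
  set g3 : ℕ × ℕ → ℝ := fun q => ∠ (p q.1) (p 1) (p q.2) with hg3
  set F : Finset ℝ := (T.image g1 ∪ T.image g2) ∪ T.image g3 with hF
  have hTmem : ∀ a b : ℕ, 2 ≤ a → a < b → b ≤ n → (a, b) ∈ T := by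
    intro a b ha hab hb
    simp only [hT, Finset.mem_filter, Finset.mem_product, Finset.mem_Icc]
    exact ⟨⟨⟨ha, by omega⟩, ⟨by omega, hb⟩⟩, hab⟩
  -- main inclusion
  have hsub : {θ : ℝ | ∃ j₁ ∈ Finset.Icc 1 n, ∃ j₂ ∈ Finset.Icc 1 n, ∃ j₃ ∈ Finset.Icc 1 n,
      p j₁ ≠ p j₂ ∧ p j₂ ≠ p j₃ ∧ p j₁ ≠ p j₃ ∧
      θ = ∠ (p j₁) (p j₂) (p j₃)} ⊆ ↑F := by
    rintro θ ⟨j₁, hj₁, j₂, hj₂, j₃, hj₃, h12, h23, h13, hθ⟩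
    simp only [Finset.mem_Icc] at hj₁ hj₂ hj₃
    have hne12 : j₁ ≠ j₂ := fun h => h12 (by rw [h])
    have hne23 : j₂ ≠ j₃ := fun h => h23 (by rw [h])
    have hne13 : j₁ ≠ j₃ := fun h => h13 (by rw [h])
    set m : ℕ := min j₁ (min j₂ j₃) with hm
    have hm1 : m ≤ j₁ := min_le_left _ _
    have hm2 : m ≤ j₂ := le_trans (min_le_right _ _) (min_le_left _ _)
    have hm3 : m ≤ j₃ := le_trans (min_le_right _ _) (min_le_right _ _)
    have hm1' : 1 ≤ m := by omega
    set a := j₁ - m + 1 with hadef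
    set b := j₂ - m + 1 with hbdef
    set c := j₃ - m + 1 with hcdef
    have hθ' : θ = ∠ (p a) (p b) (p c) := by
      rw [hθ, ← hangle m j₁ j₂ j₃ hm1 hm2 hm3]
    have han : a ≤ n := by omega
    have hbn : b ≤ n := by omega
    have hcn : c ≤ n := by omega
    have hone : a = 1 ∨ b = 1 ∨ c = 1 := by omega
    simp only [hF, Finset.coe_union, Set.mem_union, Finset.mem_coe, Finset.mem_image]
    rcases hone with h1 | h1 | h1
    · -- a = 1, b,c ≥ 2
      have hb2 : 2 ≤ b := by omega
      have hc2 : 2 ≤ c := by omega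
      have hbc : b ≠ c := by omega
      rcases lt_or_gt_of_ne hbc with h | h
      · exact Or.inl (Or.inl ⟨(b, c), hTmem b c hb2 h hcn, by
          rw [hg1]; simp only []; rw [← h1, ← hθ']⟩)
      · exact Or.inl (Or.inr ⟨(c, b), hTmem c b hc2 h hbn, by
          rw [hg2]; simp only []; rw [← h1, ← hθ']⟩)
    · -- b = 1, a,c ≥ 2
      have ha2 : 2 ≤ a := by omega
      have hc2 : 2 ≤ c := by omega
      have hac : a ≠ c := by omega
      rcases lt_or_gt_of_ne hac with h | h
      · exact Or.inr ⟨(a, c), hTmem a c ha2 h hcn, by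
          rw [hg3]; simp only []; rw [← h1, ← hθ']⟩
      · exact Or.inr ⟨(c, a), hTmem c a hc2 h han, by
          rw [hg3]; simp only []; rw [← h1, angle_comm, ← hθ']⟩
    · -- c = 1, a,b ≥ 2
      have ha2 : 2 ≤ a := by omega
      have hb2 : 2 ≤ b := by omega
      have hab : a ≠ b := by omega
      have hθ'' : θ = ∠ (p 1) (p b) (p a) := by rw [hθ', h1, angle_comm]
      rcases lt_or_gt_of_ne hab with h | h
      · exact Or.inl (Or.inr ⟨(a, b), hTmem a b ha2 h hbn, by
          rw [hg2]; simp only []; rw [← hθ'']⟩)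
      · exact Or.inl (Or.inl ⟨(b, a), hTmem b a hb2 h han, by
          rw [hg1]; simp only []; rw [← hθ'']⟩)
  -- cardinality of T
  have hTcard : T.card ≤ (n - 1).choose 2 := by
    have hmap : ∀ q ∈ T, ({q.1, q.2} : Finset ℕ) ∈ (Finset.Icc 2 n).powersetCard 2 := by
      intro q hq
      simp only [hT, Finset.mem_filter, Finset.mem_product, Finset.mem_Icc] at hq
      rw [Finset.mem_powersetCard]
      constructor
      · intro x hx
        simp only [Finset.mem_insert, Finset.mem_singleton] at hx
        rcases hx with h | h <;> simp [Finset.mem_Icc, h, hq.1.1, hq.1.2]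
      · exact Finset.card_pair (ne_of_lt hq.2)
    have hinj : Set.InjOn (fun q : ℕ × ℕ => ({q.1, q.2} : Finset ℕ)) ↑T := by
      intro q hq r hr h
      simp only [hT, Finset.coe_filter, Set.mem_setOf_eq] at hq hr
      simp only [] at h
      have h1 : q.1 ∈ ({r.1, r.2} : Finset ℕ) := h ▸ Finset.mem_insert_self _ _
      have h2 : q.2 ∈ ({r.1, r.2} : Finset ℕ) := h ▸ (by simp)
      have h3 : r.1 ∈ ({q.1, q.2} : Finset ℕ) := h ▸ Finset.mem_insert_self _ _
      simp only [Finset.mem_insert, Finset.mem_singleton] at h1 h2 h3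
      have := hq.2; have := hr.2
      ext
      · omega
      · omega
    calc T.card ≤ ((Finset.Icc 2 n).powersetCard 2).card :=
          Finset.card_le_card_of_injOn _ hmap hinj
      _ = (n - 1).choose 2 := by
          rw [Finset.card_powersetCard, Nat.card_Icc,
            show n + 1 - 2 = n - 1 from by omega]
  calc _ ≤ F.card := by
        rw [← Set.ncard_coe_finset]
        exact Set.ncard_le_ncard hsub F.finite_toSet
    _ ≤ (T.image g1 ∪ T.image g2).card + (T.image g3).card := Finset.card_union_le _ _
    _ ≤ ((T.image g1).card + (T.image g2).card) + (T.image g3).card := by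
        exact Nat.add_le_add_right (Finset.card_union_le _ _) _
    _ ≤ (T.card + T.card) + T.card := by
        gcongr <;> exact Finset.card_image_le
    _ = 3 * T.card := by ring
    _ ≤ 3 * (n - 1).choose 2 := by omega
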